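/- Let μ = (μ₁, μ₂, μ₃) ∈ ℝ³ and σ ∈ ℝ³, and set ρ₁ = 2μ₂μ₃, ρ₂ = 2μ₁μ₃, ρ₃ = 2μ₁μ₂. Then Σ_{1≤i<j≤3} μ_i²μ_j² ( |e_i × σ|² · |e_j × σ|² − ⟨e_i × σ, e_j × σ⟩² ) = (1/4) · |σ|² · (ρ₁²σ₁² + ρ₂²σ₂² + ρ₃²σ₃²). -/

import Mathlib

open Matrix

/-- `Σ_{i<j} μ_i²μ_j²( |e_i×σ|²|e_j×σ|² − ⟨e_i×σ, e_j×σ⟩² ) = ¼|σ|²(ρ₁²σ₁²+ρ₂²σ₂²+ρ₃²σ₃²)`,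
where `ρ₁ = 2μ₂μ₃`, `ρ₂ = 2μ₁μ₃`, `ρ₃ = 2μ₁μ₂`: the squared norm `‖∇σ∧∇σ‖²` equals
`¼|σ|²|Ric(σ)|²`. -/
theorem norm_sq_wedge_eq_ric (μ σ : Fin 3 → ℝ) :
    μ 0 ^ 2 * μ 1 ^ 2 *
        (((Pi.single 0 1 : Fin 3 → ℝ) ⨯₃ σ) ⬝ᵥ ((Pi.single 0 1 : Fin 3 → ℝ) ⨯₃ σ) *
            (((Pi.single 1 1 : Fin 3 → ℝ) ⨯₃ σ) ⬝ᵥ ((Pi.single 1 1 : Fin 3 → ℝ) ⨯₃ σ)) -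
          (((Pi.single 0 1 : Fin 3 → ℝ) ⨯₃ σ) ⬝ᵥ ((Pi.single 1 1 : Fin 3 → ℝ) ⨯₃ σ)) ^ 2) +
      μ 0 ^ 2 * μ 2 ^ 2 *
        (((Pi.single 0 1 : Fin 3 → ℝ) ⨯₃ σ) ⬝ᵥ ((Pi.single 0 1 : Fin 3 → ℝ) ⨯₃ σ) *
            (((Pi.single 2 1 : Fin 3 → ℝ) ⨯₃ σ) ⬝ᵥ ((Pi.single 2 1 : Fin 3 → ℝ) ⨯₃ σ)) -
          (((Pi.single 0 1 : Fin 3 → ℝ) ⨯₃ σ) ⬝ᵥ ((Pi.single 2 1 : Fin 3 → ℝ) ⨯₃ σ)) ^ 2) +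
      μ 1 ^ 2 * μ 2 ^ 2 *
        (((Pi.single 1 1 : Fin 3 → ℝ) ⨯₃ σ) ⬝ᵥ ((Pi.single 1 1 : Fin 3 → ℝ) ⨯₃ σ) *
            (((Pi.single 2 1 : Fin 3 → ℝ) ⨯₃ σ) ⬝ᵥ ((Pi.single 2 1 : Fin 3 → ℝ) ⨯₃ σ)) -
          (((Pi.single 1 1 : Fin 3 → ℝ) ⨯₃ σ) ⬝ᵥ ((Pi.single 2 1 : Fin 3 → ℝ) ⨯₃ σ)) ^ 2) =
    (1 / 4 : ℝ) * (σ ⬝ᵥ σ) *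
      ((2 * μ 1 * μ 2) ^ 2 * σ 0 ^ 2 + (2 * μ 0 * μ 2) ^ 2 * σ 1 ^ 2 +
        (2 * μ 0 * μ 1) ^ 2 * σ 2 ^ 2) := by
  have h0 : (Pi.single 0 1 : Fin 3 → ℝ) = ![1,0,0] := by
    ext i; fin_cases i <;> simp
  have h1 : (Pi.single 1 1 : Fin 3 → ℝ) = ![0,1,0] := by
    ext i; fin_cases i <;> simp
  have h2 : (Pi.single 2 1 : Fin 3 → ℝ) = ![0,0,1] := by
    ext i; fin_cases i <;> simp
  rw [h0, h1, h2]
  simp only [cross_apply, dotProduct, Fin.sum_univ_three, cons_val_zero, cons_val_one,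
    head_cons, cons_val_two, tail_cons]
  ring
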